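/- Let X and Y be topological vector spaces and b : X × X → Y a nonzero separately continuous bilinear map, and let T be a continuous linear operator on X which is b-symmetric, i.e., b(Tx, y) = b(x, Ty) for all x, y. Then T ⊕ T is not cyclic on X × X. If in addition b is non-symmetric (b(x,y) ≠ b(y,x) for some x,y), then T² is not cyclic. -/

import Mathlib

private lemma aux_dense_zero {𝕜 : Type*} [RCLike 𝕜]
    {Z : Type*} [AddCommGroup Z] [Module 𝕜 Z] [TopologicalSpace Z]
    {Y : Type*} [AddCommGroup Y] [Module 𝕜 Y] [TopologicalSpace Y] [T2Space Y]
    (g : Z →ₗ[𝕜] Y) (hg : Continuous g) {s : Set Z}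
    (h0 : ∀ z ∈ s, g z = 0)
    (hd : Dense ((Submodule.span 𝕜 s : Submodule 𝕜 Z) : Set Z)) :
    ∀ z, g z = 0 := by
  have hsub : Submodule.span 𝕜 s ≤ LinearMap.ker g :=
    Submodule.span_le.2 fun z hz => h0 z hz
  have heq : Set.EqOn ⇑g (fun _ => (0 : Y)) ((Submodule.span 𝕜 s : Submodule 𝕜 Z) : Set Z) :=
    fun z hz => hsub hz
  have := Continuous.ext_on hd hg continuous_const heq
  intro z
  exact congrFun this z

private lemma aux_powsym {𝕜 : Type*} [RCLike 𝕜]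
    {X : Type*} [AddCommGroup X] [Module 𝕜 X] [TopologicalSpace X]
    {Y : Type*} [AddCommGroup Y] [Module 𝕜 Y]
    (B : X →ₗ[𝕜] X →ₗ[𝕜] Y) (T : X →L[𝕜] X)
    (h : ∀ x y, B (T x) y = B x (T y)) :
    ∀ (n : ℕ) (x y : X), B ((T ^ n) x) y = B x ((T ^ n) y) := by
  intro n
  induction n with
  | zero => intro x y; simp
  | succ n ih =>
    intro x y
    have h1 : (T ^ (n + 1)) x = (T ^ n) (T x) := by
      rw [pow_succ]; rfl
    have h2 : (T ^ (n + 1)) y = T ((T ^ n) y) := by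
      rw [pow_succ']; rfl
    rw [h1, ih (T x) y, h x ((T ^ n) y), h2]

/-- Let `X` and `Y` be topological vector spaces, `b : X × X → Y` a nonzero separately
continuous bilinear map, and `T` a `b`-symmetric continuous linear operator on `X`
(`b(Tx,y) = b(x,Ty)`). Then `T ⊕ T` is not cyclic on `X × X`; and if moreover `b` is
non-symmetric, then `T²` is not cyclic. -/
theorem stmt_16 (𝕜 : Type*) [RCLike 𝕜]
    (X : Type*) [AddCommGroup X] [Module 𝕜 X] [TopologicalSpace X]
    [IsTopologicalAddGroup X] [ContinuousSMul 𝕜 X] [T2Space X]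
    (Y : Type*) [AddCommGroup Y] [Module 𝕜 Y] [TopologicalSpace Y]
    [IsTopologicalAddGroup Y] [ContinuousSMul 𝕜 Y] [T2Space Y]
    (b : X →ₗ[𝕜] X →ₗ[𝕜] Y) (hb : b ≠ 0)
    (hbc₁ : ∀ x : X, Continuous ⇑(b x))
    (hbc₂ : ∀ y : X, Continuous fun x : X => b x y)
    (T : X →L[𝕜] X) (hsym : ∀ x y : X, b (T x) y = b x (T y)) :
    (¬ ∃ v : X × X, Dense ((Submodule.span 𝕜
        {w : X × X | ∃ n : ℕ, w = ((T ^ n) v.1, (T ^ n) v.2)} :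
          Submodule 𝕜 (X × X)) : Set (X × X))) ∧
    ((∃ x y : X, b x y ≠ b y x) →
      ¬ ∃ x : X, Dense ((Submodule.span 𝕜
        {y : X | ∃ n : ℕ, y = ((T ^ 2) ^ n) x} : Submodule 𝕜 X) : Set X)) := by
  have hpow := aux_powsym b T hsym
  constructor
  · rintro ⟨v, hd⟩
    -- Step A : b ((T^m) v.1) y = 0 for all m, y
    have stepA : ∀ (m : ℕ) (y : X), b ((T ^ m) v.1) y = 0 := by
      intro m
      set G : (X × X) →ₗ[𝕜] Y :=
        ((b.flip ((T ^ m) v.2)).comp (LinearMap.fst 𝕜 X X)) -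
          ((b ((T ^ m) v.1)).comp (LinearMap.snd 𝕜 X X)) with hG
      have hGapp : ∀ p : X × X, G p = b p.1 ((T ^ m) v.2) - b ((T ^ m) v.1) p.2 :=
        fun p => rfl
      have hGcont : Continuous ⇑G := by
        have : ⇑G = fun p : X × X => b p.1 ((T ^ m) v.2) - b ((T ^ m) v.1) p.2 := by
          funext p; exact hGapp p
        rw [this]
        exact ((hbc₂ ((T ^ m) v.2)).comp continuous_fst).sub
          ((hbc₁ ((T ^ m) v.1)).comp continuous_snd)
      have hG0 : ∀ w ∈ {w : X × X | ∃ n : ℕ, w = ((T ^ n) v.1, (T ^ n) v.2)}, G w = 0 := by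
        rintro w ⟨n, rfl⟩
        rw [hGapp]
        simp only
        have e1 : b ((T ^ n) v.1) ((T ^ m) v.2) = b v.1 ((T ^ n) ((T ^ m) v.2)) :=
          hpow n v.1 _
        have e2 : b ((T ^ m) v.1) ((T ^ n) v.2) = b v.1 ((T ^ m) ((T ^ n) v.2)) :=
          hpow m v.1 _
        have e3 : (T ^ n) ((T ^ m) v.2) = (T ^ m) ((T ^ n) v.2) := by
          have : ∀ a c : ℕ, (T ^ a) ((T ^ c) v.2) = (T ^ (a + c)) v.2 := by
            intro a c; rw [pow_add]; rfl
          rw [this n m, this m n, add_comm]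
        rw [e1, e2, e3, sub_self]
      have hall := aux_dense_zero G hGcont hG0 hd
      intro y
      have := hall (0, y)
      rw [hGapp] at this
      simpa using this
    -- Step B : b = 0
    have : ∀ x y : X, b x y = 0 := by
      intro x y
      set H : (X × X) →ₗ[𝕜] Y := (b.flip y).comp (LinearMap.fst 𝕜 X X) with hH
      have hHapp : ∀ p : X × X, H p = b p.1 y := fun p => rfl
      have hHcont : Continuous ⇑H := by
        have : ⇑H = fun p : X × X => b p.1 y := by funext p; exact hHapp p
        rw [this]
        exact (hbc₂ y).comp continuous_fst
      have hH0 : ∀ w ∈ {w : X × X | ∃ n : ℕ, w = ((T ^ n) v.1, (T ^ n) v.2)}, H w = 0 := by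
        rintro w ⟨n, rfl⟩
        rw [hHapp]
        exact stepA n y
      have := aux_dense_zero H hHcont hH0 hd (x, 0)
      rwa [hHapp] at this
    apply hb
    ext x y
    exact this x y
  · rintro ⟨u, w, huw⟩ ⟨x, hd⟩
    set c : X →ₗ[𝕜] X →ₗ[𝕜] Y := b - b.flip with hc
    have hcapp : ∀ z y : X, c z y = b z y - b y z := fun z y => rfl
    have hcsym : ∀ z y : X, c (T z) y = c z (T y) := by
      intro z y
      rw [hcapp, hcapp, hsym z y, hsym y z]
    have hcpow := aux_powsym c T hcsym
    have hcanti : ∀ z y : X, c z y = -(c y z) := by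
      intro z y; rw [hcapp, hcapp]; abel
    -- c vanishes on orbit pairs
    have horb : ∀ a d : ℕ, c ((T ^ a) x) ((T ^ d) x) = 0 := by
      intro a d
      have key : ∀ k : ℕ, c x ((T ^ k) x) = 0 := by
        intro k
        have h1 : c ((T ^ k) x) x = c x ((T ^ k) x) := hcpow k x x
        have h2 : c ((T ^ k) x) x = -(c x ((T ^ k) x)) := hcanti _ _
        have h3 : c x ((T ^ k) x) = -(c x ((T ^ k) x)) := h1.symm.trans h2
        have h4 : c x ((T ^ k) x) + c x ((T ^ k) x) = 0 := by
          nth_rewrite 1 [h3]; abel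
        have h5 : (2 : 𝕜) • c x ((T ^ k) x) = 0 := by
          rw [two_smul]; exact h4
        have h6 : (2 : 𝕜) ≠ 0 := two_ne_zero
        exact (smul_eq_zero.1 h5).resolve_left h6
      have : c ((T ^ a) x) ((T ^ d) x) = c x ((T ^ a) ((T ^ d) x)) := hcpow a x _
      rw [this]
      have : (T ^ a) ((T ^ d) x) = (T ^ (a + d)) x := by rw [pow_add]; rfl
      rw [this]
      exact key (a + d)
    -- first density pass: c z ((T^2)^m x) = 0 for all z
    have pass1 : ∀ (m : ℕ) (z : X), c z (((T ^ 2) ^ m) x) = 0 := by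
      intro m
      set H : X →ₗ[𝕜] Y := c.flip (((T ^ 2) ^ m) x) with hH
      have hHapp : ∀ z : X, H z = c z (((T ^ 2) ^ m) x) := fun z => rfl
      have hHcont : Continuous ⇑H := by
        have : ⇑H = fun z : X => b z (((T ^ 2) ^ m) x) - b (((T ^ 2) ^ m) x) z := by
          funext z; rw [hHapp, hcapp]
        rw [this]
        exact (hbc₂ _).sub (hbc₁ _)
      have hH0 : ∀ z ∈ {y : X | ∃ n : ℕ, y = ((T ^ 2) ^ n) x}, H z = 0 := by
        rintro z ⟨n, rfl⟩
        rw [hHapp]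
        have e : ∀ k : ℕ, ((T ^ 2) ^ k) x = (T ^ (2 * k)) x := by
          intro k; rw [pow_mul]
        rw [e n, e m]
        exact horb _ _
      exact aux_dense_zero H hHcont hH0 hd
    -- second density pass: c z w = 0 for all z w
    have pass2 : ∀ z y : X, c z y = 0 := by
      intro z
      have hcont : Continuous ⇑(c z) := by
        have : ⇑(c z) = fun y : X => b z y - b y z := by funext y; rw [hcapp]
        rw [this]
        exact (hbc₁ z).sub (hbc₂ z)
      have h0 : ∀ y ∈ {y : X | ∃ n : ℕ, y = ((T ^ 2) ^ n) x}, c z y = 0 := by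
        rintro y ⟨n, rfl⟩
        exact pass1 n z
      exact aux_dense_zero (c z) hcont h0 hd
    have := pass2 u w
    rw [hcapp] at this
    exact huw (sub_eq_zero.1 this)
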